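/- For every k > 0, ρ ∈ (0,1), and all reals t* and p*, ∫_{t*}^{∞} g_{k,ρ}(ρt − p*)·φ(t) dt = exp(k²/2 − k·p*)·Φ_ρ(−p* + k, −t* + ρk) − Φ_ρ(−p*, −t*). -/

import Mathlib

open MeasureTheory Real Set

/-- Standard normal density. -/
noncomputable def stdPhi (x : ℝ) : ℝ := (Real.sqrt (2 * Real.pi))⁻¹ * Real.exp (-x ^ 2 / 2)

/-- Standard normal CDF. -/
noncomputable def stdPhiCDF (x : ℝ) : ℝ := ∫ u in Set.Iic x, stdPhi u

/-- Standard bivariate normal density with correlation `ρ`. -/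
noncomputable def biPdf (ρ x y : ℝ) : ℝ :=
  (2 * Real.pi * Real.sqrt (1 - ρ ^ 2))⁻¹ *
    Real.exp (-(x ^ 2 - 2 * ρ * x * y + y ^ 2) / (2 * (1 - ρ ^ 2)))

/-- Standard bivariate normal CDF with correlation `ρ`. -/
noncomputable def biCDF (ρ x y : ℝ) : ℝ :=
  ∫ u in Set.Iic x, ∫ v in Set.Iic y, biPdf ρ u v

/-- Normalized expected-profit function `g_{k,ρ}`. -/
noncomputable def gkr (k ρ x : ℝ) : ℝ :=
  Real.exp (k * x + k ^ 2 * (1 - ρ ^ 2) / 2) *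
      stdPhiCDF ((x + k * (1 - ρ ^ 2)) / Real.sqrt (1 - ρ ^ 2)) -
    stdPhiCDF (x / Real.sqrt (1 - ρ ^ 2))

lemma stdPhi_nonneg (x : ℝ) : 0 ≤ stdPhi x := by
  unfold stdPhi; positivity

lemma continuous_stdPhi : Continuous stdPhi := by
  unfold stdPhi; fun_prop

lemma integrable_stdPhi : Integrable stdPhi := by
  unfold stdPhi
  have := (integrable_exp_neg_mul_sq (b := (1/2:ℝ)) (by norm_num)).const_mul (Real.sqrt (2 * Real.pi))⁻¹
  convert this using 2 with x
  ring_nf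

lemma integral_stdPhi : ∫ x, stdPhi x = 1 := by
  unfold stdPhi
  rw [integral_const_mul]
  have h : ∫ x : ℝ, Real.exp (-x^2/2) = Real.sqrt (2*Real.pi) := by
    have := integral_gaussian (1/2 : ℝ)
    rw [show (Real.pi / (1/2:ℝ)) = 2 * Real.pi by ring] at this
    calc ∫ x : ℝ, Real.exp (-x^2/2) = ∫ x : ℝ, Real.exp (-(1/2:ℝ) * x^2) := by
          congr 1; ext x; ring_nf
      _ = Real.sqrt (2*Real.pi) := this
  rw [h, inv_mul_cancel₀ (by positivity)]

lemma stdPhiCDF_nonneg (x : ℝ) : 0 ≤ stdPhiCDF x :=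
  setIntegral_nonneg measurableSet_Iic (fun u _ => stdPhi_nonneg u)

lemma stdPhiCDF_le_one (x : ℝ) : stdPhiCDF x ≤ 1 := by
  rw [← integral_stdPhi]
  exact setIntegral_le_integral integrable_stdPhi (Filter.Eventually.of_forall stdPhi_nonneg)

lemma stdPhiCDF_mono : Monotone stdPhiCDF := by
  intro x y hxy
  apply setIntegral_mono_set integrable_stdPhi.integrableOn
    (Filter.Eventually.of_forall stdPhi_nonneg)
  exact HasSubset.Subset.eventuallyLE (Iic_subset_Iic.mpr hxy)

lemma measurable_stdPhiCDF : Measurable stdPhiCDF := stdPhiCDF_mono.measurable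

/-- Translation in a set integral over `Ioi`. -/
lemma integral_comp_add_right_Ioi (f : ℝ → ℝ) (a c : ℝ) :
    (∫ x in Ioi a, f (x + c)) = ∫ x in Ioi (a + c), f x := by
  have A : MeasurableEmbedding fun x : ℝ => x + c :=
    (Homeomorph.addRight c).isClosedEmbedding.measurableEmbedding
  have := A.setIntegral_map (μ := volume) f (Ioi (a + c))
  rw [map_add_right_eq_self] at this
  rw [this, show (fun x : ℝ => x + c) ⁻¹' Ioi (a + c) = Ioi a by
    ext x; simp [mem_Ioi]]

/-- The shifted/scaled Gaussian integral over `Ioi`. -/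
lemma integral_gauss_Ioi (σ m a : ℝ) (hσ : 0 < σ) :
    (∫ v in Ioi a, σ⁻¹ * stdPhi ((v - m) / σ)) = stdPhiCDF ((m - a) / σ) := by
  have h1 : (∫ v in Ioi a, σ⁻¹ * stdPhi ((v - m) / σ))
      = σ⁻¹ * ∫ v in Ioi a, stdPhi ((v - m) / σ) := by
    rw [integral_const_mul]
  rw [h1]
  have hrefl : ∀ x : ℝ, stdPhi (-x) = stdPhi x := by
    intro x; unfold stdPhi; rw [neg_pow]; norm_num
  have h2 : (∫ v in Ioi a, stdPhi ((v - m) / σ))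
      = ∫ v in Ioi (a - m), stdPhi (v / σ) := by
    have := integral_comp_add_right_Ioi (fun v => stdPhi (v / σ)) a (-m)
    simp only [← sub_eq_add_neg] at this
    exact this
  have h3 : (∫ v in Ioi (a - m), stdPhi (v / σ))
      = σ • ∫ v in Ioi (σ⁻¹ * (a - m)), stdPhi v := by
    have := integral_comp_mul_left_Ioi stdPhi (a - m) (inv_pos.mpr hσ)
    rw [inv_inv] at this
    simp only [div_eq_inv_mul]
    exact this
  have h4 : (∫ v in Ioi (σ⁻¹ * (a - m)), stdPhi v) = stdPhiCDF (-(σ⁻¹ * (a - m))) := by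
    have := integral_comp_neg_Ioi (σ⁻¹ * (a - m)) stdPhi
    unfold stdPhiCDF
    rw [← this]
    congr 1; ext v; rw [hrefl]
  rw [h2, h3, h4, smul_eq_mul, ← mul_assoc, inv_mul_cancel₀ hσ.ne', one_mul]
  congr 1
  field_simp
  ring

lemma biPdf_symm (ρ v t : ℝ) : biPdf ρ v t = biPdf ρ t v := by
  unfold biPdf; ring_nf

lemma biPdf_neg_neg (ρ v t : ℝ) : biPdf ρ (-v) (-t) = biPdf ρ v t := by
  unfold biPdf; ring_nf

lemma biPdf_nonneg {ρ : ℝ} (hρ : ρ^2 < 1) (v t : ℝ) : 0 ≤ biPdf ρ v t := by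
  unfold biPdf; positivity

lemma biPdf_eq {ρ : ℝ} (hρ : ρ^2 < 1) (v t : ℝ) :
    biPdf ρ v t
      = stdPhi t * ((Real.sqrt (1 - ρ^2))⁻¹ * stdPhi ((v - ρ*t) / Real.sqrt (1 - ρ^2))) := by
  have hs : (0:ℝ) < 1 - ρ^2 := by linarith
  have hσ : 0 < Real.sqrt (1 - ρ^2) := Real.sqrt_pos.mpr hs
  have hσ2 : Real.sqrt (1 - ρ^2) ^ 2 = 1 - ρ^2 := Real.sq_sqrt hs.le
  have h2π : Real.sqrt (2*Real.pi) * Real.sqrt (2*Real.pi) = 2*Real.pi :=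
    Real.mul_self_sqrt (by positivity)
  unfold biPdf stdPhi
  rw [div_pow, hσ2]
  rw [show ∀ c e1 e2 s : ℝ, (c * e1) * (s * (c * e2)) = (c * c * s) * (e1 * e2) by intros; ring]
  rw [← Real.exp_add]
  congr 1
  · rw [← mul_inv, ← mul_inv, h2π]
  · field_simp
    ring

lemma sqrt_pos_of {ρ : ℝ} (hρ : ρ^2 < 1) : 0 < Real.sqrt (1 - ρ^2) :=
  Real.sqrt_pos.mpr (by linarith)

lemma integral_biPdf_Ioi {ρ : ℝ} (hρ : ρ^2 < 1) (t a : ℝ) :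
    (∫ v in Ioi a, biPdf ρ v t) = stdPhi t * stdPhiCDF ((ρ*t - a) / Real.sqrt (1 - ρ^2)) := by
  simp_rw [biPdf_eq hρ]
  rw [integral_const_mul, integral_gauss_Ioi _ _ _ (sqrt_pos_of hρ)]

lemma integral_biPdf_Ioi' {ρ : ℝ} (hρ : ρ^2 < 1) (u b : ℝ) :
    (∫ v in Ioi b, biPdf ρ u v) = stdPhi u * stdPhiCDF ((ρ*u - b) / Real.sqrt (1 - ρ^2)) := by
  simp_rw [biPdf_symm ρ u]
  exact integral_biPdf_Ioi hρ u b

lemma integrable_biPdf_left {ρ : ℝ} (hρ : ρ^2 < 1) (t : ℝ) :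
    Integrable (fun v => biPdf ρ v t) := by
  simp_rw [biPdf_eq hρ]
  exact (((integrable_stdPhi.comp_div (sqrt_pos_of hρ).ne').comp_sub_right
    (ρ*t)).const_mul _).const_mul _

lemma integrable_biPdf_right {ρ : ℝ} (hρ : ρ^2 < 1) (u : ℝ) :
    Integrable (fun v => biPdf ρ u v) := by
  simp_rw [biPdf_symm ρ u]
  exact integrable_biPdf_left hρ u

lemma continuous_biPdf (ρ : ℝ) : Continuous (fun p : ℝ × ℝ => biPdf ρ p.1 p.2) := by
  unfold biPdf; fun_prop

lemma integrable_biPdf_prod {ρ : ℝ} (hρ : ρ^2 < 1) (a b : ℝ) :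
    Integrable (fun p : ℝ × ℝ => biPdf ρ p.1 p.2)
      ((volume.restrict (Ioi a)).prod (volume.restrict (Ioi b))) := by
  rw [integrable_prod_iff ((continuous_biPdf ρ).aestronglyMeasurable)]
  constructor
  · exact Filter.Eventually.of_forall fun u => (integrable_biPdf_right hρ u).restrict
  · have heq : ∀ u : ℝ, (∫ v, ‖biPdf ρ u v‖ ∂(volume.restrict (Ioi b)))
        = stdPhi u * stdPhiCDF ((ρ*u - b) / Real.sqrt (1 - ρ^2)) := by
      intro u
      rw [← integral_biPdf_Ioi' hρ u b]
      congr 1; ext v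
      exact Real.norm_of_nonneg (biPdf_nonneg hρ u v)
    simp_rw [heq]
    apply Integrable.mono (integrable_stdPhi.restrict (s := Ioi a))
    · apply AEStronglyMeasurable.mul continuous_stdPhi.aestronglyMeasurable
      exact (measurable_stdPhiCDF.comp (by fun_prop)).aestronglyMeasurable
    · refine Filter.Eventually.of_forall fun u => ?_
      rw [Real.norm_of_nonneg (mul_nonneg (stdPhi_nonneg u) (stdPhiCDF_nonneg _)),
        Real.norm_of_nonneg (stdPhi_nonneg u)]
      nlinarith [stdPhi_nonneg u, stdPhiCDF_nonneg ((ρ*u - b) / Real.sqrt (1 - ρ^2)),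
        stdPhiCDF_le_one ((ρ*u - b) / Real.sqrt (1 - ρ^2))]

lemma iterated_biPdf_eq_biCDF {ρ : ℝ} (hρ : ρ^2 < 1) (a b : ℝ) :
    (∫ t in Ioi b, ∫ v in Ioi a, biPdf ρ v t) = biCDF ρ (-a) (-b) := by
  have h1 : biCDF ρ (-a) (-b) = ∫ u in Ioi a, ∫ v in Ioi b, biPdf ρ u v := by
    unfold biCDF
    rw [← integral_comp_neg_Ioi a]
    congr 1; ext u
    rw [← integral_comp_neg_Ioi b]
    congr 1; ext v
    exact biPdf_neg_neg ρ u v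
  rw [h1]
  rw [MeasureTheory.integral_integral_swap]
  exact (integrable_biPdf_prod hρ b a).congr
    (Filter.Eventually.of_forall fun p => biPdf_symm ρ p.1 p.2)

lemma integrable_stdPhi_mul_cdf {f : ℝ → ℝ} (hf : Measurable f) :
    Integrable (fun t => stdPhi t * stdPhiCDF (f t)) := by
  apply Integrable.mono integrable_stdPhi
  · exact (continuous_stdPhi.measurable.mul (measurable_stdPhiCDF.comp hf)).aestronglyMeasurable
  · refine Filter.Eventually.of_forall fun t => ?_
    rw [Real.norm_of_nonneg (mul_nonneg (stdPhi_nonneg t) (stdPhiCDF_nonneg _)),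
      Real.norm_of_nonneg (stdPhi_nonneg t)]
    nlinarith [stdPhi_nonneg t, stdPhiCDF_nonneg (f t), stdPhiCDF_le_one (f t)]

lemma gkr_factor {k ρ : ℝ} (pstar t : ℝ) :
    gkr k ρ (ρ*t - pstar) * stdPhi t
      = Real.exp (k^2/2 - k*pstar) *
          (stdPhi (t - ρ*k) *
            stdPhiCDF ((ρ*(t - ρ*k) - (pstar - k)) / Real.sqrt (1 - ρ^2)))
        - stdPhi t * stdPhiCDF ((ρ*t - pstar) / Real.sqrt (1 - ρ^2)) := by
  unfold gkr
  have harg : (ρ*(t - ρ*k) - (pstar - k)) / Real.sqrt (1 - ρ^2)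
      = (ρ*t - pstar + k*(1 - ρ^2)) / Real.sqrt (1 - ρ^2) := by ring_nf
  rw [harg, sub_mul]
  congr 1
  · have hswap : ∀ a b c : ℝ, a * b * c = (a * c) * b := by intros; ring
    have hswap2 : ∀ a b c : ℝ, a * (b * c) = (a * b) * c := by intros; ring
    rw [hswap, hswap2]
    congr 1
    unfold stdPhi
    have hcomb : ∀ a b : ℝ, Real.exp a * ((Real.sqrt (2*Real.pi))⁻¹ * Real.exp b)
        = (Real.sqrt (2*Real.pi))⁻¹ * Real.exp (a + b) := by
      intros; rw [Real.exp_add]; ring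
    rw [hcomb, hcomb]
    congr 1
    ring
  · ring

theorem expected_joint_profit
    (k ρ tstar pstar : ℝ) (hk : 0 < k) (hρ : ρ ∈ Set.Ioo (0 : ℝ) 1) :
    ∫ t in Set.Ici tstar, gkr k ρ (ρ * t - pstar) * stdPhi t
      = Real.exp (k ^ 2 / 2 - k * pstar) * biCDF ρ (-pstar + k) (-tstar + ρ * k)
        - biCDF ρ (-pstar) (-tstar) := by
  obtain ⟨h0, h1⟩ := hρ
  have hρ2 : ρ^2 < 1 := by nlinarith
  have hσ := sqrt_pos_of hρ2
  rw [integral_Ici_eq_integral_Ioi]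
  simp_rw [gkr_factor pstar]
  set σ := Real.sqrt (1 - ρ^2) with hσdef
  set W : ℝ → ℝ := fun x => stdPhi x * stdPhiCDF ((ρ*x - (pstar - k)) / σ) with hW
  set G : ℝ → ℝ := fun t => stdPhi t * stdPhiCDF ((ρ*t - pstar) / σ) with hG
  have hWint : Integrable W := integrable_stdPhi_mul_cdf (by fun_prop)
  have hGint : Integrable G := integrable_stdPhi_mul_cdf (by fun_prop)
  have hF1 : ∀ t : ℝ, stdPhi (t - ρ*k) * stdPhiCDF ((ρ*(t - ρ*k) - (pstar - k)) / σ)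
      = W (t - ρ*k) := fun t => rfl
  simp_rw [hF1]
  rw [integral_sub (((hWint.comp_sub_right (ρ*k)).const_mul _).integrableOn) hGint.integrableOn]
  congr 1
  · rw [integral_const_mul]
    congr 1
    have htrans : (∫ t in Ioi tstar, W (t - ρ*k)) = ∫ t in Ioi (tstar - ρ*k), W t := by
      have := integral_comp_add_right_Ioi W tstar (-(ρ*k))
      simp only [← sub_eq_add_neg] at this
      exact this
    rw [htrans]
    have hWrep : ∀ t : ℝ, W t = ∫ v in Ioi (pstar - k), biPdf ρ v t := by
      intro t; rw [integral_biPdf_Ioi hρ2 t (pstar - k)]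
    simp_rw [hWrep]
    rw [iterated_biPdf_eq_biCDF hρ2 (pstar - k) (tstar - ρ*k)]
    rw [show -(pstar - k) = -pstar + k by ring, show -(tstar - ρ*k) = -tstar + ρ*k by ring]
  · have hGrep : ∀ t : ℝ, G t = ∫ v in Ioi pstar, biPdf ρ v t := by
      intro t; rw [integral_biPdf_Ioi hρ2 t pstar]
    simp_rw [hGrep]
    exact iterated_biPdf_eq_biCDF hρ2 pstar tstar
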